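/- Let n ≥ 3 and let F ∈ M_n(ℂ) satisfy F·F̄ = I_n (where F̄ denotes the entrywise complex conjugate of F). Then tr(F F*) > 2, where F* is the conjugate transpose of F. -/

import Mathlib

open Matrix

theorem stmt_0 {n : ℕ} (hn : 3 ≤ n) (F : Matrix (Fin n) (Fin n) ℂ)
    (hF : F * F.map (starRingEnd ℂ) = 1) :
    2 < (Matrix.trace (F * Fᴴ)).re := by
  have h1 : (Matrix.trace (F * F.map (starRingEnd ℂ))).re = (n : ℝ) := by
    rw [hF, Matrix.trace_one]
    simp
  have ht : (Matrix.trace (F * F.map (starRingEnd ℂ))).re =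
      ∑ i, ∑ j, (F i j * (starRingEnd ℂ) (F j i)).re := by
    simp [Matrix.trace, Matrix.diag, Matrix.mul_apply, Matrix.map_apply,
      Complex.re_sum]
  have ht2 : (Matrix.trace (F * Fᴴ)).re = ∑ i, ∑ j, Complex.normSq (F i j) := by
    simp [Matrix.trace, Matrix.diag, Matrix.mul_apply, Matrix.conjTranspose_apply,
      Complex.mul_conj, Complex.re_sum, ← Complex.ofReal_sum]
  have hterm : ∀ i j : Fin n, (F i j * (starRingEnd ℂ) (F j i)).re ≤
      (Complex.normSq (F i j) + Complex.normSq (F j i)) / 2 := by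
    intro i j
    have h := Complex.re_le_norm (F i j * (starRingEnd ℂ) (F j i))
    have habs : ‖F i j * (starRingEnd ℂ) (F j i)‖ =
        ‖F i j‖ * ‖F j i‖ := by
      simp [_root_.map_mul]
    rw [habs] at h
    nlinarith [Complex.sq_norm (F i j), Complex.sq_norm (F j i),
      sq_nonneg (‖F i j‖ - ‖F j i‖)]
  have hb : (n : ℝ) ≤ ∑ i, ∑ j, Complex.normSq (F i j) := by
    rw [← h1, ht]
    calc ∑ i, ∑ j, (F i j * (starRingEnd ℂ) (F j i)).re
        ≤ ∑ i, ∑ j, (Complex.normSq (F i j) + Complex.normSq (F j i)) / 2 := by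
          apply Finset.sum_le_sum; intro i _
          exact Finset.sum_le_sum fun j _ => hterm i j
      _ = ∑ i, ∑ j, Complex.normSq (F i j) := by
          have hc3 : ∑ i : Fin n, ∑ j : Fin n, Complex.normSq (F j i)
              = ∑ i : Fin n, ∑ j : Fin n, Complex.normSq (F i j) :=
            Finset.sum_comm ..
          simp only [add_div, Finset.sum_add_distrib, ← Finset.sum_div]
          rw [hc3]; ring
  have hn3 : (3 : ℝ) ≤ (n : ℝ) := by exact_mod_cast hn
  linarith [hb, ht2.ge, ht2.le]
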